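/- (Coefficient formula) For set partitions λ, ν of {1,...,n}: Σ_{μ⊆ν} χ^λ_μ (−1)^{|ν−μ|} q^{−nst(ν−μ,ν)} = (−1)^{|ν|} q^{dim(λ)} (q−1)^{|λ−ν|} q^{−(|λ|+snst(ν,λ)+nst(ν,ν))} · ∏_{(i,j)∈ν∩λ} ((q−1)q^{nst({(i,j)},λ)} + q^{nst({(i,j)},ν)}) · ∏_{(i,j)∈ν−λ, (i,j)∉cflt(λ)} (q^{nst({(i,j)},λ)} − q^{nst({(i,j)},ν)}). -/

import Mathlib

open scoped Classical
open Finset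

noncomputable section

/-- A set partition of `{1,…,n}` encoded as a set of arcs `(i,j)` with `1 ≤ i < j ≤ n`,
no two distinct arcs sharing a left endpoint or a right endpoint. -/
def IsSP (n : ℕ) (lam : Finset (ℕ × ℕ)) : Prop :=
  (∀ a ∈ lam, 1 ≤ a.1 ∧ a.1 < a.2 ∧ a.2 ≤ n) ∧
  (∀ a ∈ lam, ∀ b ∈ lam, a ≠ b → a.1 ≠ b.1 ∧ a.2 ≠ b.2)

/-- `nstF A B = #{(i,j,k,l) : i<j<k<l, (i,l) ∈ B, (j,k) ∈ A}`. -/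
def nstF (A B : Finset (ℕ × ℕ)) : ℕ :=
  ((B ×ˢ A).filter fun p => p.1.1 < p.2.1 ∧ p.2.1 < p.2.2 ∧ p.2.2 < p.1.2).card

/-- `dimF λ = Σ_{(i,l)∈λ} (l-i)`. -/
def dimF (lam : Finset (ℕ × ℕ)) : ℕ := ∑ a ∈ lam, (a.2 - a.1)

/-- Supercharacter value `χ^λ_μ`. -/
def chiF {K : Type*} [Field K] (q : K) (lam mu : Finset (ℕ × ℕ)) : K :=
  if ∀ i j k : ℕ, i < j → j < k → (i, k) ∈ lam → (i, j) ∉ mu ∧ (j, k) ∉ mu then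
    (q - 1) ^ (lam.card - (lam ∩ mu).card) * q ^ (dimF lam - lam.card) *
      (-1 : K) ^ ((lam ∩ mu).card) * (q ^ nstF mu lam)⁻¹
  else 0

/-- `(j,k)` conflicts with `λ`: some arc of `λ` shares an endpoint with it and strictly contains it. -/
def cfltP (lam : Finset (ℕ × ℕ)) (a : ℕ × ℕ) : Prop :=
  ∃ b ∈ lam, (b.1 = a.1 ∧ a.1 < a.2 ∧ a.2 < b.2) ∨ (b.1 < a.1 ∧ a.1 < a.2 ∧ a.2 = b.2)

/-- Strictly nested pairs: inner arc of `ν` not conflicting with `λ`, nested in an arc of `λ`. -/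
def snstF (nu lam : Finset (ℕ × ℕ)) : ℕ :=
  ((lam ×ˢ nu).filter fun p =>
    p.1.1 < p.2.1 ∧ p.2.1 < p.2.2 ∧ p.2.2 < p.1.2 ∧ ¬ cfltP lam p.2).card

/-- Multiset of arc lengths, sorted decreasingly. -/
def dimv (lam : Finset (ℕ × ℕ)) : List ℕ :=
  ((lam.val.map fun a => a.2 - a.1).sort (· ≤ ·)).reverse

/-- All set partitions of `{1,…,n}` as arc sets. -/
def allSP (n : ℕ) : Finset (Finset (ℕ × ℕ)) :=
  ((Finset.Icc 1 n ×ˢ Finset.Icc 1 n).powerset).filter (IsSP n)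

local notation "X" => (RatFunc.X : RatFunc ℚ)

lemma nstF_eq_sum (A B : Finset (ℕ × ℕ)) : nstF A B = ∑ a ∈ A, nstF {a} B := by
  unfold nstF
  rw [Finset.card_filter, Finset.sum_product_right]
  refine Finset.sum_congr rfl fun a _ => ?_
  rw [Finset.card_filter, Finset.sum_product_right, Finset.sum_singleton]

lemma snstF_eq_sum (nu lam : Finset (ℕ × ℕ)) :
    snstF nu lam = ∑ a ∈ nu.filter (fun a => ¬ cfltP lam a), nstF {a} lam := by
  unfold snstF
  rw [Finset.card_filter, Finset.sum_product_right, Finset.sum_filter]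
  refine Finset.sum_congr rfl fun a _ => ?_
  by_cases h : cfltP lam a
  · simp [h]
  · rw [if_pos h]
    rw [nstF, Finset.card_filter, Finset.sum_product_right, Finset.sum_singleton]
    simp [h]

lemma chi_cond_iff (lam mu : Finset (ℕ × ℕ)) :
    (∀ i j k : ℕ, i < j → j < k → (i, k) ∈ lam → (i, j) ∉ mu ∧ (j, k) ∉ mu) ↔
    ∀ a ∈ mu, ¬ cfltP lam a := by
  constructor
  · rintro h a ha ⟨b, hb, hcase⟩
    rcases hcase with ⟨h1, h2, h3⟩ | ⟨h1, h2, h3⟩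
    · have hb' : (a.1, b.2) = b := Prod.ext h1.symm rfl
      have := h a.1 a.2 b.2 h2 h3 (by rwa [hb'])
      exact this.1 (by simpa using ha)
    · have hb' : (b.1, a.2) = b := Prod.ext rfl h3
      have := h b.1 a.1 a.2 h1 h2 (by rwa [hb'])
      exact this.2 (by simpa using ha)
  · intro h i j k hij hjk hik
    exact ⟨fun hmem => h _ hmem ⟨(i,k), hik, Or.inl ⟨rfl, hij, hjk⟩⟩,
           fun hmem => h _ hmem ⟨(i,k), hik, Or.inr ⟨hij, hjk, rfl⟩⟩⟩

lemma not_cflt_of_mem {n : ℕ} {lam : Finset (ℕ × ℕ)} (hlam : IsSP n lam)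
    {a : ℕ × ℕ} (ha : a ∈ lam) : ¬ cfltP lam a := by
  rintro ⟨b, hb, hc⟩
  rcases hc with ⟨h1, h2, h3⟩ | ⟨h1, h2, h3⟩
  · have hne : a ≠ b := fun h => by subst h; exact lt_irrefl _ h3
    exact (hlam.2 a ha b hb hne).1 h1.symm
  · have hne : a ≠ b := fun h => by subst h; exact lt_irrefl _ h1
    exact (hlam.2 a ha b hb hne).2 h3

lemma card_le_dim {n : ℕ} {lam : Finset (ℕ × ℕ)} (hlam : IsSP n lam) :
    lam.card ≤ dimF lam := by
  calc lam.card = ∑ _a ∈ lam, 1 := by simp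
  _ ≤ ∑ a ∈ lam, (a.2 - a.1) := Finset.sum_le_sum fun a ha =>
      Nat.le_sub_of_add_le (by have := (hlam.1 a ha).2.1; omega)

lemma card_split {lam nu mu : Finset (ℕ × ℕ)} (hmu : mu ⊆ nu) :
    lam.card - (lam ∩ mu).card = (lam \ nu).card + (lam ∩ (nu \ mu)).card := by
  classical
  have h1 : lam.card - (lam ∩ mu).card = (lam \ mu).card := by
    rw [Finset.card_sdiff, Finset.inter_comm mu lam]
  have h2 : lam \ mu = (lam \ nu) ∪ (lam ∩ (nu \ mu)) := by
    ext a
    simp only [Finset.mem_sdiff, Finset.mem_union, Finset.mem_inter]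
    constructor
    · rintro ⟨hl, hm⟩
      by_cases hn : a ∈ nu
      · exact Or.inr ⟨hl, hn, hm⟩
      · exact Or.inl ⟨hl, hn⟩
    · rintro (⟨hl, hn⟩ | ⟨hl, hn, hm⟩)
      · exact ⟨hl, fun hm => hn (hmu hm)⟩
      · exact ⟨hl, hm⟩
  have h3 : Disjoint (lam \ nu) (lam ∩ (nu \ mu)) := by
    rw [Finset.disjoint_left]
    rintro a ha hb
    simp only [Finset.mem_sdiff] at ha
    simp only [Finset.mem_inter, Finset.mem_sdiff] at hb
    exact ha.2 hb.2.1
  rw [h1, h2, Finset.card_union_of_disjoint h3]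



def Ff (lam : Finset (ℕ × ℕ)) (a : ℕ × ℕ) : RatFunc ℚ :=
  (if cfltP lam a then 0 else if a ∈ lam then (-1 : RatFunc ℚ) else 1) * (X ^ nstF {a} lam)⁻¹

def Gg (lam nu : Finset (ℕ × ℕ)) (a : ℕ × ℕ) : RatFunc ℚ :=
  (if a ∈ lam then (X - 1) else 1) * (-1) * (X ^ nstF {a} nu)⁻¹

lemma prodF_eq {lam mu : Finset (ℕ × ℕ)} (hgood : ∀ a ∈ mu, ¬ cfltP lam a) :
    ∏ a ∈ mu, Ff lam a = (-1 : RatFunc ℚ) ^ ((lam ∩ mu).card) * (X ^ nstF mu lam)⁻¹ := by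
  unfold Ff
  rw [Finset.prod_mul_distrib]
  congr 1
  · have : ∀ a ∈ mu, (if cfltP lam a then 0 else if a ∈ lam then (-1 : RatFunc ℚ) else 1)
        = if a ∈ lam then (-1 : RatFunc ℚ) else 1 := fun a ha => if_neg (hgood a ha)
    rw [Finset.prod_congr rfl this, Finset.prod_ite, Finset.prod_const, Finset.prod_const_one,
      mul_one, Finset.filter_mem_eq_inter, Finset.inter_comm]
  · rw [Finset.prod_inv_distrib, Finset.prod_pow_eq_pow_sum, ← nstF_eq_sum]

lemma prodG_eq (lam nu mu : Finset (ℕ × ℕ)) :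
    ∏ a ∈ nu \ mu, Gg lam nu a =
      (X - 1) ^ ((lam ∩ (nu \ mu)).card) * (-1 : RatFunc ℚ) ^ ((nu \ mu).card) *
        (X ^ nstF (nu \ mu) nu)⁻¹ := by
  unfold Gg
  rw [Finset.prod_mul_distrib, Finset.prod_mul_distrib]
  congr 2
  · rw [Finset.prod_ite, Finset.prod_const, Finset.prod_const_one, mul_one,
      Finset.filter_mem_eq_inter, Finset.inter_comm]
  · rw [Finset.prod_const]
  · rw [Finset.prod_inv_distrib, Finset.prod_pow_eq_pow_sum, ← nstF_eq_sum]

lemma term_eq {n : ℕ} {lam nu : Finset (ℕ × ℕ)} (hlam : IsSP n lam)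
    {mu : Finset (ℕ × ℕ)} (hmu : mu ⊆ nu) :
    chiF X lam mu * (-1 : RatFunc ℚ) ^ ((nu \ mu).card) * (X ^ nstF (nu \ mu) nu)⁻¹ =
    (X - 1) ^ ((lam \ nu).card) * X ^ (dimF lam - lam.card) *
      ((∏ a ∈ mu, Ff lam a) * ∏ a ∈ nu \ mu, Gg lam nu a) := by
  by_cases hgood : ∀ a ∈ mu, ¬ cfltP lam a
  · rw [chiF, if_pos ((chi_cond_iff lam mu).mpr hgood), prodF_eq hgood, prodG_eq,
      card_split (lam := lam) hmu, pow_add]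
    ring
  · push_neg at hgood
    obtain ⟨a, ha, hc⟩ := hgood
    rw [chiF, if_neg (fun h => ((chi_cond_iff lam mu).mp h) a ha hc)]
    rw [Finset.prod_eq_zero ha (by simp [Ff, hc])]
    ring

lemma FG_eq {n : ℕ} {lam : Finset (ℕ × ℕ)} (hlam : IsSP n lam) (nu : Finset (ℕ × ℕ))
    (a : ℕ × ℕ) :
    Ff lam a + Gg lam nu a =
      (-1) * (X ^ ((if cfltP lam a then 0 else nstF {a} lam) + nstF {a} nu))⁻¹ *
      (if a ∈ lam then ((X - 1) * X ^ nstF {a} lam + X ^ nstF {a} nu)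
       else if cfltP lam a then 1 else (X ^ nstF {a} lam - X ^ nstF {a} nu)) := by
  have hX : (RatFunc.X : RatFunc ℚ) ≠ 0 := RatFunc.X_ne_zero
  unfold Ff Gg
  by_cases hm : a ∈ lam
  · simp only [hm, not_cflt_of_mem hlam hm, if_true, if_false, ite_true, ite_false,
      eq_self_iff_true]
    field_simp
    ring
  · by_cases hc : cfltP lam a
    · simp only [hm, hc, if_true, if_false, ite_true, ite_false]
      field_simp
      ring
    · simp only [hm, hc, if_true, if_false, ite_true, ite_false]
      field_simp
      ring

lemma prodFG {n : ℕ} {lam : Finset (ℕ × ℕ)} (hlam : IsSP n lam) (nu : Finset (ℕ × ℕ)) :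
    ∏ a ∈ nu, (Ff lam a + Gg lam nu a) =
      (-1 : RatFunc ℚ) ^ nu.card * (X ^ (snstF nu lam + nstF nu nu))⁻¹ *
      ((∏ a ∈ nu ∩ lam, ((X - 1) * X ^ nstF {a} lam + X ^ nstF {a} nu)) *
       ∏ a ∈ (nu \ lam).filter (fun a => ¬ cfltP lam a),
         (X ^ nstF {a} lam - X ^ nstF {a} nu)) := by
  have h1 : ∑ a ∈ nu, ((if cfltP lam a then 0 else nstF {a} lam) + nstF {a} nu)
      = snstF nu lam + nstF nu nu := by
    rw [Finset.sum_add_distrib, ← nstF_eq_sum, snstF_eq_sum, Finset.sum_filter]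
    congr 1
    refine Finset.sum_congr rfl fun a _ => ?_
    by_cases h : cfltP lam a <;> simp [h]
  have h2 : (∏ a ∈ nu, (if a ∈ lam then ((X - 1) * X ^ nstF {a} lam + X ^ nstF {a} nu)
       else if cfltP lam a then 1 else (X ^ nstF {a} lam - X ^ nstF {a} nu)))
      = (∏ a ∈ nu ∩ lam, ((X - 1) * X ^ nstF {a} lam + X ^ nstF {a} nu)) *
       ∏ a ∈ (nu \ lam).filter (fun a => ¬ cfltP lam a),
         (X ^ nstF {a} lam - X ^ nstF {a} nu) := by
    rw [Finset.prod_ite, Finset.filter_mem_eq_inter, Finset.prod_ite, Finset.prod_const_one,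
      one_mul]
    refine congrArg (fun z => (∏ a ∈ nu ∩ lam,
      ((X - 1) * X ^ nstF {a} lam + X ^ nstF {a} nu)) * z) ?_
    refine Finset.prod_congr ?_ fun _ _ => rfl
    ext a
    simp only [Finset.mem_filter, Finset.mem_sdiff]
  calc ∏ a ∈ nu, (Ff lam a + Gg lam nu a)
      = ∏ a ∈ nu, ((-1) * (X ^ ((if cfltP lam a then 0 else nstF {a} lam) + nstF {a} nu))⁻¹ *
          (if a ∈ lam then ((X - 1) * X ^ nstF {a} lam + X ^ nstF {a} nu)
           else if cfltP lam a then 1 else (X ^ nstF {a} lam - X ^ nstF {a} nu))) :=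
        Finset.prod_congr rfl fun a _ => FG_eq hlam nu a
    _ = (∏ _a ∈ nu, (-1 : RatFunc ℚ)) *
        (∏ a ∈ nu, (X ^ ((if cfltP lam a then 0 else nstF {a} lam) + nstF {a} nu))⁻¹) *
        ∏ a ∈ nu, (if a ∈ lam then ((X - 1) * X ^ nstF {a} lam + X ^ nstF {a} nu)
           else if cfltP lam a then 1 else (X ^ nstF {a} lam - X ^ nstF {a} nu)) := by
        rw [Finset.prod_mul_distrib, Finset.prod_mul_distrib]
    _ = _ := by
        rw [Finset.prod_const, Finset.prod_inv_distrib, Finset.prod_pow_eq_pow_sum, h1, h2]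


/-- Coefficient formula (Theorem 3.4): the coefficient of `ρ_ν(q)` in `χ^λ`. -/
theorem stmt_10 (n : ℕ) (lam nu : Finset (ℕ × ℕ))
    (hlam : IsSP n lam) (hnu : IsSP n nu) :
    ∑ mu ∈ nu.powerset,
      chiF X lam mu * (-1 : RatFunc ℚ) ^ ((nu \ mu).card) * (X ^ nstF (nu \ mu) nu)⁻¹ =
    (-1 : RatFunc ℚ) ^ nu.card * X ^ dimF lam * (X - 1) ^ ((lam \ nu).card) *
      (X ^ (lam.card + snstF nu lam + nstF nu nu))⁻¹ *
      (∏ a ∈ nu ∩ lam, ((X - 1) * X ^ nstF {a} lam + X ^ nstF {a} nu)) *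
      (∏ a ∈ (nu \ lam).filter (fun a => ¬ cfltP lam a),
        (X ^ nstF {a} lam - X ^ nstF {a} nu)) := by
  have hX : (RatFunc.X : RatFunc ℚ) ≠ 0 := RatFunc.X_ne_zero
  have step : ∑ mu ∈ nu.powerset,
      chiF X lam mu * (-1 : RatFunc ℚ) ^ ((nu \ mu).card) * (X ^ nstF (nu \ mu) nu)⁻¹
      = (X - 1) ^ ((lam \ nu).card) * X ^ (dimF lam - lam.card) *
        ∏ a ∈ nu, (Ff lam a + Gg lam nu a) := by
    rw [Finset.prod_add, Finset.mul_sum]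
    exact Finset.sum_congr rfl fun mu hmu => term_eq hlam (Finset.mem_powerset.mp hmu)
  rw [step, prodFG hlam nu]
  have hdim : X ^ dimF lam = X ^ (dimF lam - lam.card) * X ^ lam.card := by
    rw [← pow_add, Nat.sub_add_cancel (card_le_dim hlam)]
  rw [hdim, show lam.card + snstF nu lam + nstF nu nu
      = lam.card + (snstF nu lam + nstF nu nu) from by omega, pow_add, mul_inv]
  field_simp
  ring
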